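/- Let c, s be real with c² + s² = 1, and let κ = a + ib be a complex number with a, b real and b ≠ 0. Then it is impossible that both cos(κc) + cos(κs) = 2 and c·sin(κc) + s·sin(κs) = 0 hold, where cos and sin are the complex cosine and sine. -/
import Mathlib

open Complex in
lemma sin_sq_parts (x y t : ℝ)
    (h : Complex.sin ((x:ℂ) + (y:ℂ)*I) ^ 2 = (t:ℂ)) :
    (Real.sin x * Real.cosh y)^2 - (Real.cos x * Real.sinh y)^2 = t ∧
    (Real.sin x * Real.cosh y) * (Real.cos x * Real.sinh y) = 0 := by
  set A := Real.sin x * Real.cosh y with hA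
  set B := Real.cos x * Real.sinh y with hB
  have hs : Complex.sin ((x:ℂ) + (y:ℂ)*I) = ((A:ℝ):ℂ) + ((B:ℝ):ℂ)*I := by
    rw [Complex.sin_add_mul_I, hA, hB]
    push_cast
    ring
  rw [hs] at h
  have hre := congrArg Complex.re h
  have him := congrArg Complex.im h
  simp [pow_two, Complex.mul_re, Complex.mul_im, Complex.add_re, Complex.add_im] at hre him
  constructor
  · nlinarith [hre]
  · nlinarith [him]

-- sin z ^2 = -t with t>0 forces sinh^2 (im) = t
lemma sin_sq_neg (x y t : ℝ) (ht : 0 < t)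
    (h : Complex.sin ((x:ℂ) + (y:ℂ)*Complex.I) ^ 2 = ((-t : ℝ):ℂ)) :
    Real.sinh y ^ 2 = t := by
  obtain ⟨h1, h2⟩ := sin_sq_parts x y (-t) h
  set A := Real.sin x * Real.cosh y with hA
  set B := Real.cos x * Real.sinh y with hB
  have hAz : A = 0 := by
    by_contra hAne
    have hBz : B = 0 := by
      rcases mul_eq_zero.mp h2 with h | h
      · exact absurd h hAne
      · exact h
    nlinarith
  have hsx : Real.sin x = 0 := by
    have := Real.cosh_pos y
    have : Real.cosh y ≠ 0 := ne_of_gt this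
    rcases mul_eq_zero.mp hAz with h | h
    · exact h
    · exact absurd h this
  have hcx : Real.cos x ^ 2 = 1 := by
    have := Real.sin_sq_add_cos_sq x
    nlinarith
  have hBsq : B^2 = Real.sinh y ^2 := by rw [hB, mul_pow, hcx, one_mul]
  have hAsq : A^2 = 0 := by rw [hAz]; ring
  linarith

-- sin z ^2 = t with t>0 forces sinh y = 0 or cosh^2 y = t
lemma sin_sq_pos (x y t : ℝ) (ht : 0 < t)
    (h : Complex.sin ((x:ℂ) + (y:ℂ)*Complex.I) ^ 2 = ((t : ℝ):ℂ)) :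
    Real.sinh y = 0 ∨ Real.cosh y ^ 2 = t := by
  obtain ⟨h1, h2⟩ := sin_sq_parts x y t h
  set A := Real.sin x * Real.cosh y with hA
  set B := Real.cos x * Real.sinh y with hB
  have hBz : B = 0 := by
    by_contra hBne
    have hAz : A = 0 := by
      rcases mul_eq_zero.mp h2 with h | h
      · exact h
      · exact absurd h hBne
    nlinarith
  rcases mul_eq_zero.mp hBz with h | h
  · -- cos x = 0
    right
    have hsx : Real.sin x ^ 2 = 1 := by
      have := Real.sin_sq_add_cos_sq x
      nlinarith
    have hAsq : A^2 = Real.cosh y ^2 := by rw [hA, mul_pow, hsx, one_mul]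
    have hBsq : B^2 = 0 := by rw [hBz]; ring
    linarith
  · exact Or.inl h

lemma sinh_sq_lt {u v : ℝ} (h : Real.sinh u ^ 2 < Real.sinh v ^ 2) : u^2 < v^2 := by
  have h1 : |Real.sinh u| < |Real.sinh v| := by
    have := abs_nonneg (Real.sinh u)
    nlinarith [sq_abs (Real.sinh u), sq_abs (Real.sinh v), abs_nonneg (Real.sinh v)]
  rw [Real.abs_sinh, Real.abs_sinh] at h1
  have h2 : |u| < |v| := Real.sinh_lt_sinh.mp h1
  nlinarith [sq_abs u, sq_abs v, abs_nonneg u, abs_nonneg v]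

open Complex in
theorem no_complex_eigenvalue_satisfies_both
    (c s : ℝ) (hcs : c^2 + s^2 = 1)
    (a b : ℝ) (hb : b ≠ 0) (κ : ℂ) (hκ : κ = Complex.mk a b) :
    ¬ (Complex.cos (κ * (c : ℂ)) + Complex.cos (κ * (s : ℂ)) = 2 ∧
        (c : ℂ) * Complex.sin (κ * (c : ℂ)) + (s : ℂ) * Complex.sin (κ * (s : ℂ)) = 0) := by
  rintro ⟨h1, h2⟩
  -- half angles
  set α : ℂ := κ * (c:ℂ) / 2 with hαdef
  set β : ℂ := κ * (s:ℂ) / 2 with hβdef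
  have hκc : κ * (c:ℂ) = 2 * α := by rw [hαdef]; ring
  have hκs : κ * (s:ℂ) = 2 * β := by rw [hβdef]; ring
  rw [hκc, hκs, Complex.cos_two_mul, Complex.cos_two_mul] at h1
  rw [hκc, hκs, Complex.sin_two_mul, Complex.sin_two_mul] at h2
  have hsin1 : Complex.sin α ^ 2 + Complex.sin β ^ 2 = 0 := by
    have hα := Complex.sin_sq_add_cos_sq α
    have hβ := Complex.sin_sq_add_cos_sq β
    linear_combination hα + hβ - h1/2
  -- express α β in terms of reals
  have hαeq : α = ((a*c/2 : ℝ):ℂ) + ((b*c/2 : ℝ):ℂ) * I := by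
    rw [hαdef, hκ]
    apply Complex.ext <;> simp [Complex.div_re, Complex.div_im, Complex.normSq]
  have hβeq : β = ((a*s/2 : ℝ):ℂ) + ((b*s/2 : ℝ):ℂ) * I := by
    rw [hβdef, hκ]
    apply Complex.ext <;> simp [Complex.div_re, Complex.div_im, Complex.normSq]
  by_cases hP : Complex.sin α = 0
  · -- both sin zero: α, β real multiples of π
    have hQ : Complex.sin β = 0 := by
      have : Complex.sin β ^ 2 = 0 := by
        rw [hP] at hsin1; simpa using hsin1
      exact pow_eq_zero_iff (by norm_num) |>.mp this
    have hc0 : c = 0 := by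
      rw [Complex.sin_eq_zero_iff] at hP
      obtain ⟨k, hk⟩ := hP
      have : α.im = 0 := by rw [hk]; simp
      rw [hαeq] at this
      simp at this
      rcases this with h | h
      · exact absurd h hb
      · exact h
    have hs0 : s = 0 := by
      rw [Complex.sin_eq_zero_iff] at hQ
      obtain ⟨k, hk⟩ := hQ
      have : β.im = 0 := by rw [hk]; simp
      rw [hβeq] at this
      simp at this
      rcases this with h | h
      · exact absurd h hb
      · exact h
    rw [hc0, hs0] at hcs; norm_num at hcs
  · -- sin α ≠ 0
    have hkey : (c:ℂ)^2 * Complex.cos α ^2 + (s:ℂ)^2 * Complex.cos β ^2 = 0 := by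
      have hsq : ((c:ℂ) * (2 * Complex.sin α * Complex.cos α))^2
          = ((s:ℂ) * (2 * Complex.sin β * Complex.cos β))^2 := by
        have : (c:ℂ) * (2 * Complex.sin α * Complex.cos α)
            = -((s:ℂ) * (2 * Complex.sin β * Complex.cos β)) := by
          linear_combination h2
        rw [this]; ring
      have hP2 : Complex.sin α ^ 2 ≠ 0 := pow_ne_zero _ hP
      have hsinβ : Complex.sin β ^2 = - Complex.sin α ^2 := by linear_combination hsin1
      -- c² sin²α cos²α = s² sin²β cos²β = -s² sin²α cos²β
      have : Complex.sin α ^2 * ((c:ℂ)^2 * Complex.cos α ^2 + (s:ℂ)^2 * Complex.cos β ^2) = 0 := by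
        linear_combination hsq/4 + ((s:ℂ)^2 * Complex.cos β ^2) * hsinβ
      rcases mul_eq_zero.mp this with h | h
      · exact absurd h hP2
      · exact h
    -- derive (c²-s²) sin²β = -1
    have hcsC : (c:ℂ)^2 + (s:ℂ)^2 = 1 := by exact_mod_cast congrArg (Complex.ofReal) hcs
    have hw : ((c:ℂ)^2 - (s:ℂ)^2) * Complex.sin β ^2 = -1 := by
      have hcosα : Complex.cos α ^2 = 1 - Complex.sin α ^2 := by
        linear_combination Complex.sin_sq_add_cos_sq α
      have hcosβ : Complex.cos β ^2 = 1 - Complex.sin β ^2 := by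
        linear_combination Complex.sin_sq_add_cos_sq β
      have hsinα : Complex.sin α ^2 = - Complex.sin β ^2 := by linear_combination hsin1
      linear_combination hkey - (c:ℂ)^2*hcosα - (s:ℂ)^2*hcosβ + (c:ℂ)^2*hsinα - hcsC
    have hd : c^2 - s^2 ≠ 0 := by
      intro h0
      have h0C : ((c:ℂ)^2 - (s:ℂ)^2) = 0 := by exact_mod_cast congrArg (Complex.ofReal) h0
      rw [h0C, zero_mul] at hw
      norm_num at hw
    set r : ℝ := -1/(c^2 - s^2) with hrdef
    have hr : Complex.sin β ^2 = ((r:ℝ):ℂ) := by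
      have hdC : ((c:ℂ)^2 - (s:ℂ)^2) ≠ 0 := by
        intro h0
        apply hd
        exact_mod_cast h0
      rw [hrdef]
      push_cast
      field_simp
      linear_combination hw
    have hrα : Complex.sin α ^2 = ((-r : ℝ):ℂ) := by
      push_cast
      linear_combination hsin1 - hr
    have hrne : r ≠ 0 := by
      rw [hrdef]
      exact div_ne_zero (by norm_num) hd
    -- relation between r and sign of c²-s²
    have hrsign : r * (c^2 - s^2) = -1 := by
      rw [hrdef]; field_simp
    rcases lt_trichotomy r 0 with hrneg | hrz | hrpos
    · -- r < 0 : sin²β = r = -(-r) with -r>0 : sinh²(bs/2) = -r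
      have hβ2 : Complex.sin ((↑(a*s/2):ℂ) + (↑(b*s/2):ℂ)*I)^2 = ((-(-r) : ℝ):ℂ) := by
        rw [← hβeq, hr]; norm_num
      have hβsinh := sin_sq_neg (a*s/2) (b*s/2) (-r) (by linarith) hβ2
      have hα2 : Complex.sin ((↑(a*c/2):ℂ) + (↑(b*c/2):ℂ)*I)^2 = ((-r : ℝ):ℂ) := by
        rw [← hαeq, hrα]
      rcases sin_sq_pos (a*c/2) (b*c/2) (-r) (by linarith) hα2 with h | h
      · -- sinh(bc/2)=0 ⇒ c = 0
        have hc0 : c = 0 := by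
          have : b*c/2 = 0 := by
            have := Real.sinh_eq_zero.mp h  -- maybe name wrong
            exact this
          rcases mul_eq_zero.mp (by linarith : b * c = 0) with h' | h'
          · exact absurd h' hb
          · exact h'
        rw [hc0] at hrsign
        have hs1 : s^2 = 1 := by rw [hc0] at hcs; linarith
        rw [hs1] at hrsign
        nlinarith
      · -- cosh²(bc/2) = -r and sinh²(bs/2) = -r
        have hcoshsq : Real.cosh (b*c/2)^2 = Real.sinh (b*c/2)^2 + 1 := Real.cosh_sq _
        have hlt : Real.sinh (b*c/2)^2 < Real.sinh (b*s/2)^2 := by nlinarith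
        have := sinh_sq_lt hlt
        have hb2 : 0 < b^2 := by positivity
        have h4 : b^2*(c^2) < b^2*(s^2) := by
          have h5 := this
          ring_nf at h5 ⊢
          linarith
        have hcs2 : c^2 < s^2 := (mul_lt_mul_iff_right₀ hb2).mp h4
        nlinarith [mul_pos (neg_pos.mpr hrneg) (sub_pos.mpr hcs2), hrsign]
    · exact hrne hrz
    · -- r > 0 : sin²α = -r : sinh²(bc/2) = r ; sin²β = r
      have hα2 : Complex.sin ((↑(a*c/2):ℂ) + (↑(b*c/2):ℂ)*I)^2 = ((-r : ℝ):ℂ) := by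
        rw [← hαeq, hrα]
      have hαsinh := sin_sq_neg (a*c/2) (b*c/2) r hrpos hα2
      have hβ2 : Complex.sin ((↑(a*s/2):ℂ) + (↑(b*s/2):ℂ)*I)^2 = ((r : ℝ):ℂ) := by
        rw [← hβeq, hr]
      rcases sin_sq_pos (a*s/2) (b*s/2) r hrpos hβ2 with h | h
      · have hs0 : s = 0 := by
          have : b*s/2 = 0 := Real.sinh_eq_zero.mp h
          rcases mul_eq_zero.mp (by linarith : b * s = 0) with h' | h'
          · exact absurd h' hb
          · exact h'
        rw [hs0] at hrsign
        have hc1 : c^2 = 1 := by rw [hs0] at hcs; linarith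
        rw [hc1] at hrsign
        nlinarith
      · have hcoshsq : Real.cosh (b*s/2)^2 = Real.sinh (b*s/2)^2 + 1 := Real.cosh_sq _
        have hlt : Real.sinh (b*s/2)^2 < Real.sinh (b*c/2)^2 := by nlinarith
        have := sinh_sq_lt hlt
        have hb2 : 0 < b^2 := by positivity
        have h4 : b^2*(s^2) < b^2*(c^2) := by
          have h5 := this
          ring_nf at h5 ⊢
          linarith
        have hcs2 : s^2 < c^2 := (mul_lt_mul_iff_right₀ hb2).mp h4
        nlinarith [mul_pos hrpos (sub_pos.mpr hcs2), hrsign]
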